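/- Let a, w₃, c₃, β, L, m, v_b be real numbers with a > 0, L > 0, w₃ > 0, m > 0, v_b > 0. Define the 2×2 complex matrices C⁰ = a·[[1,−1],[−1,1]] and C¹ = −(i w₃ L²/2)·[[1,1],[1,1]] + i β·[[0,1],[−1,0]] − (i w₃ c₃²/(2L²))·[[1,−1],[−1,1]], and for ω ∈ ℂ and δ > 0 set p(ω, δ) = det(δ C⁰ + δ ω C¹ − (ω² m / v_b²)·I). Then there exist δ₀ > 0 and a function ω₂ : (0, δ₀) → ℂ such that p(ω₂(δ), δ) = 0 and Re ω₂(δ) > 0 for every δ ∈ (0, δ₀), and ω₂(δ) = √(2 δ v_b² a / m) − i δ v_b² w₃ c₃² / (2 m L²) + O(δ^{3/2}) as δ → 0⁺. -/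

import Mathlib

open Asymptotics Topology

noncomputable section

/-- The periodic capacitance matrix `C⁰ = a [[1,−1],[−1,1]]` (Lemma 3.5 of the paper). -/
def Cmat0 (a : ℝ) : Matrix (Fin 2) (Fin 2) ℂ := (a : ℂ) • !![1, -1; -1, 1]

/-- The higher-order capacitance matrix
`C¹ = −(i w₃ L²/2)[[1,1],[1,1]] + iβ[[0,1],[−1,0]] − (i w₃ c₃²/(2L²))[[1,−1],[−1,1]]`
(Lemma 3.6(ii) of the paper). -/
def Cmat1 (w3 c3 β L : ℝ) : Matrix (Fin 2) (Fin 2) ℂ :=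
  (-(Complex.I * (w3 : ℂ) * (L : ℂ) ^ 2) / 2) • !![1, 1; 1, 1] +
    (Complex.I * (β : ℂ)) • !![0, 1; -1, 0] +
    (-(Complex.I * (w3 : ℂ) * (c3 : ℂ) ^ 2) / (2 * (L : ℂ) ^ 2)) • !![1, -1; -1, 1]

/-- The leading-order characteristic polynomial (4.2) of the quasiperiodic subwavelength
resonance problem: `p(ω, δ) = det(δ C⁰ + δ ω C¹ − (ω² m / v_b²) I)`. -/
def charPoly (a w3 c3 β L m vb : ℝ) (ω : ℂ) (δ : ℝ) : ℂ :=
  Matrix.det ((δ : ℂ) • Cmat0 a + ((δ : ℂ) * ω) • Cmat1 w3 c3 β L -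
    ((ω ^ 2 * (m : ℂ) / (vb : ℂ) ^ 2)) • (1 : Matrix (Fin 2) (Fin 2) ℂ))

/-- The rescaled cubic equation. -/
def Gfun (a k : ℝ) (A Bc Cc : ℂ) (ε : ℝ) (z : ℂ) : ℂ :=
  (k : ℂ) ^ 2 * z ^ 3 - 2 * (ε : ℂ) * (k : ℂ) * (A + Cc) * z ^ 2 +
    ((ε : ℂ) ^ 2 * (4 * A * Cc + Bc ^ 2) - 2 * (a : ℂ) * (k : ℂ)) * z +
    4 * (ε : ℂ) * (a : ℂ) * A

set_option maxHeartbeats 1000000 in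
lemma charPoly_factor (a w3 c3 β L m vb k : ℝ) (A Bc Cc : ℂ)
    (hL : (L : ℂ) ≠ 0) (hvb : (vb : ℂ) ≠ 0)
    (hk : (k : ℂ) = (m : ℂ) / (vb : ℂ) ^ 2)
    (hA : A = -(Complex.I * (w3 : ℂ) * (L : ℂ) ^ 2) / 2)
    (hB : Bc = Complex.I * (β : ℂ))
    (hC : Cc = -(Complex.I * (w3 : ℂ) * (c3 : ℂ) ^ 2) / (2 * (L : ℂ) ^ 2))
    (ε : ℝ) (z : ℂ) :
    charPoly a w3 c3 β L m vb ((ε : ℂ) * z) (ε ^ 2) =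
      (ε : ℂ) ^ 4 * z * Gfun a k A Bc Cc ε z := by
  set δ : ℂ := ((ε ^ 2 : ℝ) : ℂ) with hδ
  set ω : ℂ := (ε : ℂ) * z with hω
  have hM : (δ : ℂ) • Cmat0 a + (δ * ω) • Cmat1 w3 c3 β L -
      ((ω ^ 2 * (m : ℂ) / (vb : ℂ) ^ 2)) • (1 : Matrix (Fin 2) (Fin 2) ℂ) =
      !![δ * a + δ * ω * (A + Cc) - (k : ℂ) * ω ^ 2, -(δ * a) + δ * ω * (A + Bc - Cc);
         -(δ * a) + δ * ω * (A - Bc - Cc), δ * a + δ * ω * (A + Cc) - (k : ℂ) * ω ^ 2] := by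
    subst hA hB hC
    ext i j
    fin_cases i <;> fin_cases j <;>
      · simp only [Cmat0, Cmat1, Matrix.sub_apply, Matrix.add_apply, Matrix.smul_apply,
          Matrix.one_apply, Matrix.cons_val', Matrix.cons_val_zero, Matrix.cons_val_one,
          Matrix.head_cons, Matrix.head_fin_const, Matrix.empty_val', Matrix.cons_val_fin_one,
          Matrix.of_apply, smul_eq_mul, Fin.isValue]
        norm_num
        try rw [hk]
        field_simp
        try ring
        try tauto
  rw [charPoly, hM, Matrix.det_fin_two_of, Gfun, hδ, hω]
  push_cast
  ring

lemma quad_vieta (qa qb qc : ℂ) (ha : qa ≠ 0) :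
    ∃ r s : ℂ, qb = -(qa * (r + s)) ∧ qc = qa * (r * s) := by
  obtain ⟨d, hd⟩ := IsAlgClosed.exists_pow_nat_eq (qb ^ 2 - 4 * qa * qc) (n := 2) two_pos
  refine ⟨(-qb + d) / (2 * qa), (-qb - d) / (2 * qa), ?_, ?_⟩
  · field_simp
    ring
  · field_simp
    linear_combination hd


open Polynomial in
lemma cubic_vieta (c3 c2 c1 c0 : ℂ) (h3 : c3 ≠ 0) :
    ∃ r1 r2 r3 : ℂ, c2 = -(c3 * (r1 + r2 + r3)) ∧
      c1 = c3 * (r1 * r2 + r1 * r3 + r2 * r3) ∧ c0 = -(c3 * (r1 * r2 * r3)) := by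
  obtain ⟨r1, hr1⟩ := IsAlgClosed.exists_root
    (p := C c3 * X ^ 3 + C c2 * X ^ 2 + C c1 * X + C c0)
    (by rw [Polynomial.degree_cubic h3]; simp)
  have hroot : c3 * r1 ^ 3 + c2 * r1 ^ 2 + c1 * r1 + c0 = 0 := by
    simpa [Polynomial.IsRoot] using hr1
  obtain ⟨r2, r3, hb, hc⟩ := quad_vieta c3 (c2 + c3 * r1) (c1 + c2 * r1 + c3 * r1 ^ 2) h3
  exact ⟨r1, r2, r3, by linear_combination hb, by linear_combination hc - r1 * hb,
    by linear_combination -r1 * hc + hroot⟩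

/-- The complex modulus as an absolute value. -/
def Complex.abs : AbsoluteValue ℂ ℝ where
  toFun x := ‖x‖
  map_mul' := norm_mul
  nonneg' := norm_nonneg
  eq_zero' _ := norm_eq_zero
  add_le' := norm_add_le

lemma Complex.abs_ofReal (r : ℝ) : Complex.abs (r : ℂ) = |r| := Complex.norm_real r

lemma Complex.norm_eq_abs (z : ℂ) : ‖z‖ = Complex.abs z := rfl

/-- Among three candidate roots, the nearest one to the target is quantitatively close. -/
lemma nearest (u v w : ℂ) (R P c η : ℝ) (hc : 0 < c)
    (hRv : Complex.abs v ≤ R) (hRw : Complex.abs w ≤ R)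
    (huv : Complex.abs u ≤ Complex.abs v) (huw : Complex.abs u ≤ Complex.abs w)
    (hP : Complex.abs (u * v * w) ≤ P)
    (hS : 2 * c ≤ Complex.abs (u * v + (u * w + v * w)))
    (hPη : P ≤ η ^ 3) (hηR : η * (2 * R) ≤ c) (hη : 0 ≤ η) :
    Complex.abs u ≤ P / c := by
  have hu0 : 0 ≤ Complex.abs u := Complex.abs.nonneg u
  have hv0 : 0 ≤ Complex.abs v := Complex.abs.nonneg v
  have hw0 : 0 ≤ Complex.abs w := Complex.abs.nonneg w
  have hR0 : 0 ≤ R := le_trans hv0 hRv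
  have h3 : Complex.abs u ^ 3 ≤ P := by
    have t1 : Complex.abs u * Complex.abs u ≤ Complex.abs v * Complex.abs w :=
      mul_le_mul huv huw hu0 hv0
    have : Complex.abs u ^ 3 ≤ Complex.abs u * Complex.abs v * Complex.abs w := by
      nlinarith [t1, hu0]
    calc Complex.abs u ^ 3 ≤ Complex.abs u * Complex.abs v * Complex.abs w := this
      _ = Complex.abs (u * v * w) := by rw [map_mul, map_mul]
      _ ≤ P := hP
  have huη : Complex.abs u ≤ η := le_of_pow_le_pow_left₀ (by norm_num) hη (h3.trans hPη)
  have hvw : c ≤ Complex.abs (v * w) := by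
    have h1 : Complex.abs (u * v + u * w) ≤ η * (2 * R) := by
      calc Complex.abs (u * v + u * w) ≤ Complex.abs (u * v) + Complex.abs (u * w) :=
            Complex.abs.add_le _ _
        _ = Complex.abs u * Complex.abs v + Complex.abs u * Complex.abs w := by
            rw [map_mul, map_mul]
        _ ≤ η * R + η * R := by
            have h1 := mul_le_mul huη hRv hv0 hη
            have h2 := mul_le_mul huη hRw hw0 hη
            linarith
        _ = η * (2 * R) := by ring
    have h2 : Complex.abs (u * v + (u * w + v * w)) ≤ Complex.abs (u * v + u * w) +
        Complex.abs (v * w) := by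
      have := Complex.abs.add_le (u * v + u * w) (v * w)
      calc Complex.abs (u * v + (u * w + v * w)) = Complex.abs ((u * v + u * w) + v * w) := by
            ring_nf
        _ ≤ _ := this
    linarith
  have hfin : Complex.abs u * c ≤ P := by
    calc Complex.abs u * c ≤ Complex.abs u * Complex.abs (v * w) := by
          exact mul_le_mul_of_nonneg_left hvw hu0
      _ = Complex.abs (u * v * w) := by rw [← map_mul, ← mul_assoc]
      _ ≤ P := hP
  exact (le_div_iff₀ hc).mpr hfin

set_option maxHeartbeats 4000000 in
lemma key_root (a k z₀ : ℝ) (A Bc Cc z₁ : ℂ) (ha : 0 < a) (hk : 0 < k)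
    (hz₀pos : 0 < z₀) (hz₀c : (k : ℂ) * (z₀ : ℂ) ^ 2 = 2 * (a : ℂ))
    (hz₁ : (k : ℂ) * z₁ = Cc) :
    ∃ ε₀ > (0 : ℝ), ∃ K : ℝ, 0 < K ∧ ∀ ε : ℝ, 0 < ε → ε < ε₀ →
      ∃ z : ℂ, Gfun a k A Bc Cc ε z = 0 ∧
        Complex.abs (z - ((z₀ : ℂ) + (ε : ℂ) * z₁)) ≤ K * ε ^ 2 ∧ z₀ / 2 ≤ z.re := by
  have hkc : (k : ℂ) ≠ 0 := by exact_mod_cast hk.ne'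
  obtain ⟨e2, he2⟩ : ∃ x : ℂ, x = (z₀ : ℂ) * (Bc ^ 2 - Cc ^ 2) := ⟨_, rfl⟩
  obtain ⟨e3, he3⟩ : ∃ x : ℂ, x = z₁ * (Bc ^ 2 - Cc ^ 2 + 2 * A * Cc) := ⟨_, rfl⟩
  obtain ⟨M, hM⟩ : ∃ x : ℝ, x = Complex.abs e2 + Complex.abs e3 + 1 := ⟨_, rfl⟩
  have hMpos : 0 < M := by rw [hM]; positivity
  obtain ⟨s1, hs1⟩ : ∃ x : ℂ, x = 2 * (k : ℂ) * (z₀ : ℂ) * (Cc - 2 * A) := ⟨_, rfl⟩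
  obtain ⟨s2, hs2⟩ : ∃ x : ℂ, x = Bc ^ 2 - Cc ^ 2 := ⟨_, rfl⟩
  obtain ⟨M2, hM2⟩ : ∃ x : ℝ, x = Complex.abs s1 + Complex.abs s2 + 1 := ⟨_, rfl⟩
  have hM2pos : 0 < M2 := by rw [hM2]; positivity
  obtain ⟨Sb, hSb⟩ : ∃ x : ℝ, x = 2 * k * Complex.abs (A + Cc) + Complex.abs (4 * A * Cc + Bc ^ 2) + 2 * a * k + 4 * a * Complex.abs A := ⟨_, rfl⟩
  have hSbnn : 0 ≤ Sb := by rw [hSb]; positivity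
  obtain ⟨R₀, hR₀⟩ : ∃ x : ℝ, x = 1 + Sb / k ^ 2 := ⟨_, rfl⟩
  have hR₀one : (1 : ℝ) ≤ R₀ := by
    rw [hR₀]
    have : 0 ≤ Sb / k ^ 2 := by positivity
    linarith
  obtain ⟨R₁, hR₁⟩ : ∃ x : ℝ, x = z₀ + Complex.abs z₁ + R₀ := ⟨_, rfl⟩
  have hR₁pos : 0 < R₁ := by
    rw [hR₁]; have := Complex.abs.nonneg z₁; linarith
  obtain ⟨c, hc⟩ : ∃ x : ℝ, x = a / k := ⟨_, rfl⟩
  have hcpos : 0 < c := by rw [hc]; positivity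
  obtain ⟨η, hη⟩ : ∃ x : ℝ, x = c / (2 * R₁ + 1) := ⟨_, rfl⟩
  have hηpos : 0 < η := by rw [hη]; exact div_pos hcpos (by linarith)
  obtain ⟨K, hK⟩ : ∃ x : ℝ, x = M / (k * a) := ⟨_, rfl⟩
  have hKpos : 0 < K := by rw [hK]; positivity
  refine ⟨min 1 (min (2 * a * k / M2) (min (η ^ 3 * k ^ 2 / M)
      (z₀ / (2 * (Complex.abs z₁ + K + 1))))),
      lt_min one_pos (lt_min (div_pos (by positivity) hM2pos)
        (lt_min (div_pos (mul_pos (pow_pos hηpos 3) (pow_pos hk 2)) hMpos)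
          (div_pos hz₀pos (by linarith [Complex.abs.nonneg z₁])))),
      K, hKpos, ?_⟩
  intro ε hε hεlt
  have hε1 : ε ≤ 1 := le_trans hεlt.le (min_le_left _ _)
  have hε2 : ε ≤ 2 * a * k / M2 :=
    le_trans hεlt.le ((min_le_right _ _).trans (min_le_left _ _))
  have hε3 : ε ≤ η ^ 3 * k ^ 2 / M :=
    le_trans hεlt.le ((min_le_right _ _).trans ((min_le_right _ _).trans (min_le_left _ _)))
  have hε4 : ε ≤ z₀ / (2 * (Complex.abs z₁ + K + 1)) :=
    le_trans hεlt.le ((min_le_right _ _).trans ((min_le_right _ _).trans (min_le_right _ _)))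
  obtain ⟨ζ, hζ⟩ : ∃ x : ℂ, x = (z₀ : ℂ) + (ε : ℂ) * z₁ := ⟨_, rfl⟩
  -- expansion of G at the approximate root
  have hEeq : Gfun a k A Bc Cc ε ζ = (ε : ℂ) ^ 2 * (e2 + (ε : ℂ) * e3) := by
    simp only [Gfun, hζ, he2, he3]
    linear_combination ((k : ℂ) * (z₀ : ℂ) + 3 * (k : ℂ) * (ε : ℂ) * z₁ -
        2 * (ε : ℂ) * (A + Cc)) * hz₀c +
      ((ε : ℂ) ^ 2 * (z₀ : ℂ) * (3 * (k : ℂ) * z₁ - 4 * A - Cc) + 4 * (a : ℂ) * (ε : ℂ) +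
        (ε : ℂ) ^ 3 * z₁ * ((k : ℂ) * z₁ - 2 * A - Cc)) * hz₁
  have hEb : Complex.abs (Gfun a k A Bc Cc ε ζ) ≤ M * ε ^ 2 := by
    rw [hEeq, map_mul, map_pow, Complex.abs_ofReal, abs_of_pos hε]
    have h1 : Complex.abs (e2 + (ε : ℂ) * e3) ≤ M := by
      calc Complex.abs (e2 + (ε : ℂ) * e3) ≤ Complex.abs e2 + Complex.abs ((ε : ℂ) * e3) :=
            Complex.abs.add_le _ _
        _ = Complex.abs e2 + ε * Complex.abs e3 := by
            rw [map_mul, Complex.abs_ofReal, abs_of_pos hε]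
        _ ≤ M := by
            rw [hM]
            linarith [mul_le_mul_of_nonneg_right hε1 (Complex.abs.nonneg e3)]
    calc ε ^ 2 * Complex.abs (e2 + (ε : ℂ) * e3) ≤ ε ^ 2 * M := by
          exact mul_le_mul_of_nonneg_left h1 (by positivity)
      _ = M * ε ^ 2 := by ring
  -- factorization of the cubic
  obtain ⟨r1, r2, r3, hv1, hv2, hv3⟩ := cubic_vieta ((k : ℂ) ^ 2)
    (-(2 * (ε : ℂ) * (k : ℂ) * (A + Cc)))
    ((ε : ℂ) ^ 2 * (4 * A * Cc + Bc ^ 2) - 2 * (a : ℂ) * (k : ℂ))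
    (4 * (ε : ℂ) * (a : ℂ) * A) (pow_ne_zero 2 hkc)
  have hfac : ∀ z : ℂ, Gfun a k A Bc Cc ε z =
      (k : ℂ) ^ 2 * ((z - r1) * ((z - r2) * (z - r3))) := by
    intro z
    simp only [Gfun]
    linear_combination z ^ 2 * hv1 + z * hv2 + hv3
  have hroots : Gfun a k A Bc Cc ε r1 = 0 ∧ Gfun a k A Bc Cc ε r2 = 0 ∧
      Gfun a k A Bc Cc ε r3 = 0 := by
    refine ⟨?_, ?_, ?_⟩ <;> rw [hfac] <;> ring_nf <;> simp [sub_self]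
  -- the pair-sum bound
  have hσ : (k : ℂ) ^ 2 * ((ζ - r1) * (ζ - r2) + ((ζ - r1) * (ζ - r3) + (ζ - r2) * (ζ - r3))) =
      4 * (a : ℂ) * (k : ℂ) + (ε : ℂ) * (s1 + (ε : ℂ) * s2) := by
    have hΦeq : 3 * (k : ℂ) ^ 2 * ζ ^ 2 - 4 * (ε : ℂ) * (k : ℂ) * (A + Cc) * ζ +
        ((ε : ℂ) ^ 2 * (4 * A * Cc + Bc ^ 2) - 2 * (a : ℂ) * (k : ℂ)) =
        4 * (a : ℂ) * (k : ℂ) + (ε : ℂ) * (s1 + (ε : ℂ) * s2) := by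
      simp only [hζ, hs1, hs2]
      linear_combination 3 * (k : ℂ) * hz₀c + (6 * (k : ℂ) * (ε : ℂ) * (z₀ : ℂ) +
        (ε : ℂ) ^ 2 * (3 * (k : ℂ) * z₁ - 4 * A - Cc)) * hz₁
    rw [← hΦeq]
    linear_combination (-2 * ζ) * hv1 - hv2
  have hΦb : 2 * (a * k) ≤ Complex.abs (4 * (a : ℂ) * (k : ℂ) + (ε : ℂ) * (s1 + (ε : ℂ) * s2)) := by
    have h1 : Complex.abs ((ε : ℂ) * (s1 + (ε : ℂ) * s2)) ≤ ε * M2 := by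
      rw [map_mul, Complex.abs_ofReal, abs_of_pos hε]
      have : Complex.abs (s1 + (ε : ℂ) * s2) ≤ M2 := by
        calc Complex.abs (s1 + (ε : ℂ) * s2) ≤ Complex.abs s1 + Complex.abs ((ε : ℂ) * s2) :=
              Complex.abs.add_le _ _
          _ = Complex.abs s1 + ε * Complex.abs s2 := by
              rw [map_mul, Complex.abs_ofReal, abs_of_pos hε]
          _ ≤ M2 := by
              rw [hM2]
              linarith [mul_le_mul_of_nonneg_right hε1 (Complex.abs.nonneg s2)]
      exact mul_le_mul_of_nonneg_left this hε.le
    have h2 : ε * M2 ≤ 2 * a * k := (le_div_iff₀ hM2pos).mp hε2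
    have h3 : Complex.abs (4 * (a : ℂ) * (k : ℂ)) = 4 * (a * k) := by
      have : (4 : ℂ) * (a : ℂ) * (k : ℂ) = ((4 * a * k : ℝ) : ℂ) := by push_cast; ring
      rw [this, Complex.abs_ofReal, abs_of_pos (by positivity)]
      ring
    have h4 : Complex.abs (4 * (a : ℂ) * (k : ℂ)) ≤
        Complex.abs (4 * (a : ℂ) * (k : ℂ) + (ε : ℂ) * (s1 + (ε : ℂ) * s2)) +
          Complex.abs ((ε : ℂ) * (s1 + (ε : ℂ) * s2)) := by
      calc Complex.abs (4 * (a : ℂ) * (k : ℂ)) =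
            Complex.abs ((4 * (a : ℂ) * (k : ℂ) + (ε : ℂ) * (s1 + (ε : ℂ) * s2)) -
              (ε : ℂ) * (s1 + (ε : ℂ) * s2)) := by ring_nf
        _ ≤ _ := by
            have := Complex.abs.add_le
              (4 * (a : ℂ) * (k : ℂ) + (ε : ℂ) * (s1 + (ε : ℂ) * s2))
              (-((ε : ℂ) * (s1 + (ε : ℂ) * s2)))
            simpa [sub_eq_add_neg] using this
    linarith
  -- bound on all roots
  have hrb : ∀ r : ℂ, Gfun a k A Bc Cc ε r = 0 → Complex.abs r ≤ R₀ := by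
    intro r hr
    by_contra hcon
    push_neg at hcon
    have h1 : (1 : ℝ) ≤ Complex.abs r := le_trans hR₀one hcon.le
    have hr2 : (0 : ℝ) < Complex.abs r ^ 2 := by positivity
    have hrle : Complex.abs r ≤ Complex.abs r ^ 2 := by
      rw [pow_two]
      calc Complex.abs r = 1 * Complex.abs r := (one_mul _).symm
        _ ≤ Complex.abs r * Complex.abs r :=
            mul_le_mul_of_nonneg_right h1 (Complex.abs.nonneg r)
    have h1le : (1 : ℝ) ≤ Complex.abs r ^ 2 := by
      rw [pow_two]
      have := mul_le_mul h1 h1 zero_le_one (zero_le_one.trans h1)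
      linarith
    have hcube : (k : ℂ) ^ 2 * r ^ 3 =
        -((-(2 * (ε : ℂ) * (k : ℂ) * (A + Cc))) * r ^ 2 +
          (((ε : ℂ) ^ 2 * (4 * A * Cc + Bc ^ 2) - 2 * (a : ℂ) * (k : ℂ)) * r +
            4 * (ε : ℂ) * (a : ℂ) * A)) := by
      simp only [Gfun] at hr
      linear_combination hr
    have hb2 : Complex.abs (-(2 * (ε : ℂ) * (k : ℂ) * (A + Cc))) ≤
        2 * k * Complex.abs (A + Cc) := by
      have he : (-(2 * (ε : ℂ) * (k : ℂ) * (A + Cc))) = ((-(2 * ε * k) : ℝ) : ℂ) * (A + Cc) := by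
        push_cast; ring
      rw [he, map_mul, Complex.abs_ofReal, abs_neg, abs_of_pos (by positivity)]
      have h2 : 2 * ε * k ≤ 2 * k := by
        linarith [mul_le_mul_of_nonneg_right hε1 hk.le]
      exact mul_le_mul_of_nonneg_right h2 (Complex.abs.nonneg (A + Cc))
    have hb1 : Complex.abs ((ε : ℂ) ^ 2 * (4 * A * Cc + Bc ^ 2) - 2 * (a : ℂ) * (k : ℂ)) ≤
        Complex.abs (4 * A * Cc + Bc ^ 2) + 2 * a * k := by
      have t1 : Complex.abs ((ε : ℂ) ^ 2 * (4 * A * Cc + Bc ^ 2)) ≤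
          Complex.abs (4 * A * Cc + Bc ^ 2) := by
        rw [map_mul, map_pow, Complex.abs_ofReal, abs_of_pos hε]
        have hε2' : ε ^ 2 ≤ 1 := by
          rw [pow_two]
          have := mul_le_mul hε1 hε1 hε.le zero_le_one
          linarith
        linarith [mul_le_mul_of_nonneg_right hε2'
          (Complex.abs.nonneg (4 * A * Cc + Bc ^ 2))]
      have t2 : Complex.abs (2 * (a : ℂ) * (k : ℂ)) = 2 * a * k := by
        have : (2 : ℂ) * (a : ℂ) * (k : ℂ) = ((2 * a * k : ℝ) : ℂ) := by push_cast; ring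
        rw [this, Complex.abs_ofReal, abs_of_pos (by positivity)]
      have t3 := Complex.abs.add_le ((ε : ℂ) ^ 2 * (4 * A * Cc + Bc ^ 2))
        (-(2 * (a : ℂ) * (k : ℂ)))
      rw [Complex.abs.map_neg, t2] at t3
      rw [sub_eq_add_neg]
      calc Complex.abs ((ε : ℂ) ^ 2 * (4 * A * Cc + Bc ^ 2) + -(2 * (a : ℂ) * (k : ℂ))) ≤
            Complex.abs ((ε : ℂ) ^ 2 * (4 * A * Cc + Bc ^ 2)) + 2 * a * k := by
            have t4 := Complex.abs.add_le ((ε : ℂ) ^ 2 * (4 * A * Cc + Bc ^ 2))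
              (-(2 * (a : ℂ) * (k : ℂ)))
            rw [Complex.abs.map_neg, t2] at t4
            exact t4
        _ ≤ Complex.abs (4 * A * Cc + Bc ^ 2) + 2 * a * k := by linarith
    have hb0 : Complex.abs (4 * (ε : ℂ) * (a : ℂ) * A) ≤ 4 * a * Complex.abs A := by
      have he : (4 * (ε : ℂ) * (a : ℂ) * A) = ((4 * ε * a : ℝ) : ℂ) * A := by push_cast; ring
      rw [he, map_mul, Complex.abs_ofReal, abs_of_pos (by positivity)]
      have h2 : 4 * ε * a ≤ 4 * a := by
        linarith [mul_le_mul_of_nonneg_right hε1 ha.le]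
      exact mul_le_mul_of_nonneg_right h2 (Complex.abs.nonneg A)
    have hmain : k ^ 2 * Complex.abs r ^ 3 ≤ Sb * Complex.abs r ^ 2 := by
      have hL1 : k ^ 2 * Complex.abs r ^ 3 = Complex.abs ((k : ℂ) ^ 2 * r ^ 3) := by
        rw [map_mul, map_pow, map_pow, Complex.abs_ofReal, abs_of_pos hk]
      have u2 : Complex.abs ((-(2 * (ε : ℂ) * (k : ℂ) * (A + Cc))) * r ^ 2) ≤
          (2 * k * Complex.abs (A + Cc)) * Complex.abs r ^ 2 := by
        rw [map_mul, map_pow]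
        exact mul_le_mul_of_nonneg_right hb2 (by positivity)
      have u1 : Complex.abs ((((ε : ℂ) ^ 2 * (4 * A * Cc + Bc ^ 2) - 2 * (a : ℂ) * (k : ℂ))) * r) ≤
          (Complex.abs (4 * A * Cc + Bc ^ 2) + 2 * a * k) * Complex.abs r ^ 2 := by
        rw [map_mul]
        calc Complex.abs ((ε : ℂ) ^ 2 * (4 * A * Cc + Bc ^ 2) - 2 * (a : ℂ) * (k : ℂ)) *
              Complex.abs r ≤
            (Complex.abs (4 * A * Cc + Bc ^ 2) + 2 * a * k) * Complex.abs r :=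
              mul_le_mul_of_nonneg_right hb1 (Complex.abs.nonneg r)
          _ ≤ (Complex.abs (4 * A * Cc + Bc ^ 2) + 2 * a * k) * Complex.abs r ^ 2 :=
              mul_le_mul_of_nonneg_left hrle (by positivity)
      have u0 : Complex.abs (4 * (ε : ℂ) * (a : ℂ) * A) ≤
          (4 * a * Complex.abs A) * Complex.abs r ^ 2 := by
        calc Complex.abs (4 * (ε : ℂ) * (a : ℂ) * A) ≤ 4 * a * Complex.abs A := hb0
          _ = (4 * a * Complex.abs A) * 1 := by ring
          _ ≤ (4 * a * Complex.abs A) * Complex.abs r ^ 2 :=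
              mul_le_mul_of_nonneg_left h1le (by positivity)
      have tri : Complex.abs ((-(2 * (ε : ℂ) * (k : ℂ) * (A + Cc))) * r ^ 2 +
            (((ε : ℂ) ^ 2 * (4 * A * Cc + Bc ^ 2) - 2 * (a : ℂ) * (k : ℂ)) * r +
              4 * (ε : ℂ) * (a : ℂ) * A)) ≤
          Complex.abs ((-(2 * (ε : ℂ) * (k : ℂ) * (A + Cc))) * r ^ 2) +
            (Complex.abs ((((ε : ℂ) ^ 2 * (4 * A * Cc + Bc ^ 2) - 2 * (a : ℂ) * (k : ℂ))) * r) +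
              Complex.abs (4 * (ε : ℂ) * (a : ℂ) * A)) := by
        have t1 := Complex.abs.add_le ((-(2 * (ε : ℂ) * (k : ℂ) * (A + Cc))) * r ^ 2)
          ((((ε : ℂ) ^ 2 * (4 * A * Cc + Bc ^ 2) - 2 * (a : ℂ) * (k : ℂ))) * r +
            4 * (ε : ℂ) * (a : ℂ) * A)
        have t2 := Complex.abs.add_le
          ((((ε : ℂ) ^ 2 * (4 * A * Cc + Bc ^ 2) - 2 * (a : ℂ) * (k : ℂ))) * r)
          (4 * (ε : ℂ) * (a : ℂ) * A)
        linarith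
      rw [hL1, hcube, Complex.abs.map_neg, hSb]
      calc Complex.abs ((-(2 * (ε : ℂ) * (k : ℂ) * (A + Cc))) * r ^ 2 +
            (((ε : ℂ) ^ 2 * (4 * A * Cc + Bc ^ 2) - 2 * (a : ℂ) * (k : ℂ)) * r +
              4 * (ε : ℂ) * (a : ℂ) * A)) ≤
          Complex.abs ((-(2 * (ε : ℂ) * (k : ℂ) * (A + Cc))) * r ^ 2) +
            (Complex.abs ((((ε : ℂ) ^ 2 * (4 * A * Cc + Bc ^ 2) - 2 * (a : ℂ) * (k : ℂ))) * r) +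
              Complex.abs (4 * (ε : ℂ) * (a : ℂ) * A)) := tri
        _ ≤ (2 * k * Complex.abs (A + Cc) + Complex.abs (4 * A * Cc + Bc ^ 2) + 2 * a * k +
              4 * a * Complex.abs A) * Complex.abs r ^ 2 := by
            have expand : (2 * k * Complex.abs (A + Cc) + Complex.abs (4 * A * Cc + Bc ^ 2) +
                2 * a * k + 4 * a * Complex.abs A) * Complex.abs r ^ 2 =
                (2 * k * Complex.abs (A + Cc)) * Complex.abs r ^ 2 +
                ((Complex.abs (4 * A * Cc + Bc ^ 2) + 2 * a * k) * Complex.abs r ^ 2 +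
                  (4 * a * Complex.abs A) * Complex.abs r ^ 2) := by ring
            rw [expand]
            gcongr
    have hfin : Complex.abs r ≤ Sb / k ^ 2 := by
      rw [le_div_iff₀ (by positivity : (0 : ℝ) < k ^ 2)]
      have harr : k ^ 2 * Complex.abs r ^ 3 = (Complex.abs r * k ^ 2) * Complex.abs r ^ 2 := by
        ring
      rw [harr] at hmain
      exact (mul_le_mul_iff_of_pos_right hr2).mp hmain
    rw [hR₀] at hcon
    linarith
  -- distances from ζ to the roots
  have hζabs : Complex.abs ζ ≤ z₀ + Complex.abs z₁ := by
    rw [hζ]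
    calc Complex.abs ((z₀ : ℂ) + (ε : ℂ) * z₁) ≤
          Complex.abs ((z₀ : ℂ)) + Complex.abs ((ε : ℂ) * z₁) :=
          Complex.abs.add_le _ _
      _ = z₀ + ε * Complex.abs z₁ := by
          rw [map_mul, Complex.abs_ofReal, Complex.abs_ofReal, abs_of_pos hε, abs_of_pos hz₀pos]
      _ ≤ z₀ + Complex.abs z₁ := by
          linarith [mul_le_mul_of_nonneg_right hε1 (Complex.abs.nonneg z₁)]
  have hd1 : Complex.abs (ζ - r1) ≤ R₁ := by
    calc Complex.abs (ζ - r1) ≤ Complex.abs ζ + Complex.abs r1 := by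
          have := Complex.abs.add_le ζ (-r1); simpa [sub_eq_add_neg] using this
      _ ≤ R₁ := by have := hrb r1 hroots.1; rw [hR₁]; linarith
  have hd2 : Complex.abs (ζ - r2) ≤ R₁ := by
    calc Complex.abs (ζ - r2) ≤ Complex.abs ζ + Complex.abs r2 := by
          have := Complex.abs.add_le ζ (-r2); simpa [sub_eq_add_neg] using this
      _ ≤ R₁ := by have := hrb r2 hroots.2.1; rw [hR₁]; linarith
  have hd3 : Complex.abs (ζ - r3) ≤ R₁ := by
    calc Complex.abs (ζ - r3) ≤ Complex.abs ζ + Complex.abs r3 := by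
          have := Complex.abs.add_le ζ (-r3); simpa [sub_eq_add_neg] using this
      _ ≤ R₁ := by have := hrb r3 hroots.2.2; rw [hR₁]; linarith
  -- product and pair-sum bounds in distance form
  have hk2 : (0 : ℝ) < k ^ 2 := by positivity
  have hcpos' : (0 : ℝ) < a / k := by positivity
  have hPabs : Complex.abs ((ζ - r1) * ((ζ - r2) * (ζ - r3))) ≤ (M * ε ^ 2) / k ^ 2 := by
    rw [le_div_iff₀ hk2]
    have habs := congrArg Complex.abs (hfac ζ).symm
    rw [map_mul, map_pow, Complex.abs_ofReal, abs_of_pos hk] at habs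
    linarith [hEb, habs.ge, habs.le]
  have hSabs : 2 * (a / k) ≤
      Complex.abs ((ζ - r1) * (ζ - r2) + ((ζ - r1) * (ζ - r3) + (ζ - r2) * (ζ - r3))) := by
    have habs := congrArg Complex.abs hσ
    rw [map_mul, map_pow, Complex.abs_ofReal, abs_of_pos hk] at habs
    have h2 : 2 * (a * k) ≤ k ^ 2 *
        Complex.abs ((ζ - r1) * (ζ - r2) + ((ζ - r1) * (ζ - r3) + (ζ - r2) * (ζ - r3))) := by
      rw [habs]; exact hΦb
    rw [show 2 * (a / k) = 2 * (a * k) / k ^ 2 by field_simp, div_le_iff₀ hk2]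
    linarith
  have hε2' : ε ^ 2 ≤ ε := by
    rw [pow_two]
    have := mul_le_mul_of_nonneg_left hε1 hε.le
    linarith
  have hPη' : (M * ε ^ 2) / k ^ 2 ≤ η ^ 3 := by
    have h3 : M * ε ^ 2 ≤ M * ε := mul_le_mul_of_nonneg_left hε2' hMpos.le
    have h4 : M * ε ≤ M * (η ^ 3 * k ^ 2 / M) := mul_le_mul_of_nonneg_left hε3 hMpos.le
    have h5 : M * (η ^ 3 * k ^ 2 / M) = η ^ 3 * k ^ 2 := by field_simp
    rw [div_le_iff₀ hk2]
    linarith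
  have hηR' : η * (2 * R₁) ≤ a / k := by
    have hexp : η * (2 * R₁ + 1) = η * (2 * R₁) + η := by ring
    have h6 : η * (2 * R₁ + 1) = a / k := by
      rw [hη, hc]
      field_simp
    linarith
  have hKe : ((M * ε ^ 2) / k ^ 2) / (a / k) = K * ε ^ 2 := by
    rw [hK]
    field_simp
  -- wrap-up for whichever root is nearest
  have finish : ∀ r : ℂ, Gfun a k A Bc Cc ε r = 0 →
      Complex.abs (ζ - r) ≤ ((M * ε ^ 2) / k ^ 2) / (a / k) →
      ∃ z : ℂ, Gfun a k A Bc Cc ε z = 0 ∧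
        Complex.abs (z - ((z₀ : ℂ) + (ε : ℂ) * z₁)) ≤ K * ε ^ 2 ∧ z₀ / 2 ≤ z.re := by
    intro r hGr hdist
    rw [hKe] at hdist
    have hdist' : Complex.abs (r - ζ) ≤ K * ε ^ 2 := by
      rw [Complex.abs.map_sub]; exact hdist
    refine ⟨r, hGr, by rw [← hζ]; exact hdist', ?_⟩
    have h1 : (ζ - r).re ≤ Complex.abs (ζ - r) := Complex.re_le_norm _
    have hsubre : (ζ - r).re = ζ.re - r.re := Complex.sub_re _ _
    have h2 : ζ.re = z₀ + ε * z₁.re := by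
      rw [hζ]
      simp [Complex.add_re, Complex.ofReal_re, Complex.mul_re, Complex.ofReal_im]
    have h3 : -Complex.abs z₁ ≤ z₁.re := (abs_le.mp (Complex.abs_re_le_norm z₁)).1
    have hmul : ε * (-(Complex.abs z₁)) ≤ ε * z₁.re := mul_le_mul_of_nonneg_left h3 hε.le
    have h5 : ε * (Complex.abs z₁ + K + 1) ≤ z₀ / 2 := by
      have hden : (0 : ℝ) < 2 * (Complex.abs z₁ + K + 1) := by
        linarith [Complex.abs.nonneg z₁]
      have := (le_div_iff₀ hden).mp hε4
      have hexp : ε * (2 * (Complex.abs z₁ + K + 1)) = 2 * (ε * (Complex.abs z₁ + K + 1)) := by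
        ring
      linarith
    have h6 : K * ε ^ 2 ≤ K * ε := mul_le_mul_of_nonneg_left hε2' hKpos.le
    have hexp2 : ε * (Complex.abs z₁ + K + 1) = ε * Complex.abs z₁ + K * ε + ε := by ring
    have hexp3 : ε * (-(Complex.abs z₁)) = -(ε * Complex.abs z₁) := by ring
    linarith [hdist, hε.le]
  rcases le_total (Complex.abs (ζ - r1)) (Complex.abs (ζ - r2)) with h12 | h12
  · rcases le_total (Complex.abs (ζ - r1)) (Complex.abs (ζ - r3)) with h13 | h13
    · exact finish r1 hroots.1 (nearest (ζ - r1) (ζ - r2) (ζ - r3) R₁ ((M * ε ^ 2) / k ^ 2)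
        (a / k) η hcpos' hd2 hd3 h12 h13 (by rw [mul_assoc]; exact hPabs) hSabs
        hPη' hηR' hηpos.le)
    · -- r3 nearest (abs (ζ-r3) ≤ abs (ζ-r1) ≤ abs (ζ-r2))
      exact finish r3 hroots.2.2 (nearest (ζ - r3) (ζ - r1) (ζ - r2) R₁ ((M * ε ^ 2) / k ^ 2)
        (a / k) η hcpos' hd1 hd2 h13 (h13.trans h12)
        (by rw [show (ζ - r3) * (ζ - r1) * (ζ - r2) = (ζ - r1) * ((ζ - r2) * (ζ - r3)) by ring]
            exact hPabs)
        (by rw [show (ζ - r3) * (ζ - r1) + ((ζ - r3) * (ζ - r2) + (ζ - r1) * (ζ - r2)) =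
              (ζ - r1) * (ζ - r2) + ((ζ - r1) * (ζ - r3) + (ζ - r2) * (ζ - r3)) by ring]
            exact hSabs)
        hPη' hηR' hηpos.le)
  · rcases le_total (Complex.abs (ζ - r2)) (Complex.abs (ζ - r3)) with h23 | h23
    · exact finish r2 hroots.2.1 (nearest (ζ - r2) (ζ - r1) (ζ - r3) R₁ ((M * ε ^ 2) / k ^ 2)
        (a / k) η hcpos' hd1 hd3 h12 h23
        (by rw [show (ζ - r2) * (ζ - r1) * (ζ - r3) = (ζ - r1) * ((ζ - r2) * (ζ - r3)) by ring]
            exact hPabs)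
        (by rw [show (ζ - r2) * (ζ - r1) + ((ζ - r2) * (ζ - r3) + (ζ - r1) * (ζ - r3)) =
              (ζ - r1) * (ζ - r2) + ((ζ - r1) * (ζ - r3) + (ζ - r2) * (ζ - r3)) by ring]
            exact hSabs)
        hPη' hηR' hηpos.le)
    · exact finish r3 hroots.2.2 (nearest (ζ - r3) (ζ - r1) (ζ - r2) R₁ ((M * ε ^ 2) / k ^ 2)
        (a / k) η hcpos' hd1 hd2 (h23.trans h12) h23
        (by rw [show (ζ - r3) * (ζ - r1) * (ζ - r2) = (ζ - r1) * ((ζ - r2) * (ζ - r3)) by ring]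
            exact hPabs)
        (by rw [show (ζ - r3) * (ζ - r1) + ((ζ - r3) * (ζ - r2) + (ζ - r1) * (ζ - r2)) =
              (ζ - r1) * (ζ - r2) + ((ζ - r1) * (ζ - r3) + (ζ - r2) * (ζ - r3)) by ring]
            exact hSabs)
        hPη' hηR' hηpos.le)

set_option maxHeartbeats 1000000 in
/-- Second subwavelength resonant frequency (Theorem 4.3 of the paper):
`ω₂(δ) = √(2δ v_b² a/m) − i δ v_b² w₃ c₃²/(2 m L²) + O(δ^{3/2})` as `δ → 0⁺`,
with positive real part. Its imaginary part is proportional to `c₃²`, characterizing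
the sharp Fano resonance. -/
theorem second_resonance_asymptotics (a w3 c3 β L m vb : ℝ)
    (ha : 0 < a) (hL : 0 < L) (hw3 : 0 < w3) (hm : 0 < m) (hvb : 0 < vb) :
    ∃ δ₀ > (0 : ℝ), ∃ ω₂ : ℝ → ℂ,
      (∀ δ : ℝ, 0 < δ → δ < δ₀ →
        charPoly a w3 c3 β L m vb (ω₂ δ) δ = 0 ∧ 0 < (ω₂ δ).re) ∧
      (fun δ : ℝ => ω₂ δ - (((Real.sqrt (2 * δ * vb ^ 2 * a / m) : ℝ) : ℂ) -
          Complex.I * (δ : ℂ) * (vb : ℂ) ^ 2 * (w3 : ℂ) * (c3 : ℂ) ^ 2 /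
            (2 * (m : ℂ) * (L : ℂ) ^ 2)))
        =O[𝓝[>] (0 : ℝ)] (fun δ : ℝ => δ ^ ((3 : ℝ) / 2)) := by
  have hvbc : (vb : ℂ) ≠ 0 := by exact_mod_cast hvb.ne'
  have hLc : (L : ℂ) ≠ 0 := by exact_mod_cast hL.ne'
  obtain ⟨k, hk_def⟩ : ∃ x : ℝ, x = m / vb ^ 2 := ⟨_, rfl⟩
  have hk : 0 < k := by rw [hk_def]; positivity
  have hkc : (k : ℂ) ≠ 0 := by exact_mod_cast hk.ne'
  obtain ⟨A, hA⟩ : ∃ x : ℂ, x = -(Complex.I * (w3 : ℂ) * (L : ℂ) ^ 2) / 2 := ⟨_, rfl⟩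
  obtain ⟨Bc, hB⟩ : ∃ x : ℂ, x = Complex.I * (β : ℂ) := ⟨_, rfl⟩
  obtain ⟨Cc, hC⟩ : ∃ x : ℂ, x = -(Complex.I * (w3 : ℂ) * (c3 : ℂ) ^ 2) / (2 * (L : ℂ) ^ 2) :=
    ⟨_, rfl⟩
  obtain ⟨z₀, hz₀def⟩ : ∃ x : ℝ, x = Real.sqrt (2 * a / k) := ⟨_, rfl⟩
  have hz₀pos : 0 < z₀ := by rw [hz₀def]; exact Real.sqrt_pos.mpr (by positivity)
  have hz₀sq : z₀ ^ 2 = 2 * a / k := by rw [hz₀def]; exact Real.sq_sqrt (by positivity)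
  have hz₀c : (k : ℂ) * (z₀ : ℂ) ^ 2 = 2 * (a : ℂ) := by
    have h : k * z₀ ^ 2 = 2 * a := by rw [hz₀sq]; field_simp
    exact_mod_cast h
  obtain ⟨z₁, hz₁def⟩ : ∃ x : ℂ, x = Cc / (k : ℂ) := ⟨_, rfl⟩
  have hz₁ : (k : ℂ) * z₁ = Cc := by rw [hz₁def]; field_simp
  obtain ⟨ε₀, hε₀pos, K, hKpos, hKey⟩ := key_root a k z₀ A Bc Cc z₁ ha hk hz₀pos hz₀c hz₁
  have hsqlt : ∀ δ : ℝ, 0 < δ → δ < ε₀ ^ 2 → Real.sqrt δ < ε₀ := by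
    intro δ h1 h2
    rw [show ε₀ = Real.sqrt (ε₀ ^ 2) from (Real.sqrt_sq hε₀pos.le).symm]
    exact Real.sqrt_lt_sqrt h1.le h2
  have hchoice : ∀ δ : ℝ, ∃ z : ℂ, (0 < δ ∧ δ < ε₀ ^ 2) →
      (Gfun a k A Bc Cc (Real.sqrt δ) z = 0 ∧
        Complex.abs (z - ((z₀ : ℂ) + ((Real.sqrt δ : ℝ) : ℂ) * z₁)) ≤ K * Real.sqrt δ ^ 2 ∧
        z₀ / 2 ≤ z.re) := by
    intro δ
    by_cases h : 0 < δ ∧ δ < ε₀ ^ 2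
    · obtain ⟨z, hz⟩ := hKey (Real.sqrt δ) (Real.sqrt_pos.mpr h.1) (hsqlt δ h.1 h.2)
      exact ⟨z, fun _ => hz⟩
    · exact ⟨0, fun hc => absurd hc h⟩
  choose zf hzf using hchoice
  refine ⟨ε₀ ^ 2, by positivity, fun δ => ((Real.sqrt δ : ℝ) : ℂ) * zf δ, ?_, ?_⟩
  · intro δ h1 h2
    obtain ⟨hG, hdist, hre⟩ := hzf δ ⟨h1, h2⟩
    constructor
    · have hfac := charPoly_factor a w3 c3 β L m vb k A Bc Cc hLc hvbc
        (by rw [hk_def]; push_cast; ring) hA hB hC (Real.sqrt δ) (zf δ)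
      rw [Real.sq_sqrt h1.le] at hfac
      rw [hfac, hG, mul_zero]
    · have hre' : (((Real.sqrt δ : ℝ) : ℂ) * zf δ).re = Real.sqrt δ * (zf δ).re := by
        simp [Complex.mul_re]
      rw [hre']
      exact mul_pos (Real.sqrt_pos.mpr h1) (lt_of_lt_of_le (by positivity) hre)
  · rw [Asymptotics.isBigO_iff]
    refine ⟨K, ?_⟩
    filter_upwards [Ioo_mem_nhdsGT_of_mem
      (show (0 : ℝ) ∈ Set.Ico (0 : ℝ) (ε₀ ^ 2) from ⟨le_refl _, by positivity⟩)] with δ hδ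
    obtain ⟨hG, hdist, hre⟩ := hzf δ ⟨hδ.1, hδ.2⟩
    have hδ0 : (0 : ℝ) ≤ δ := hδ.1.le
    have htar : (((Real.sqrt (2 * δ * vb ^ 2 * a / m) : ℝ)) : ℂ) -
        Complex.I * (δ : ℂ) * (vb : ℂ) ^ 2 * (w3 : ℂ) * (c3 : ℂ) ^ 2 /
          (2 * (m : ℂ) * (L : ℂ) ^ 2) =
        ((Real.sqrt δ : ℝ) : ℂ) * ((z₀ : ℂ) + ((Real.sqrt δ : ℝ) : ℂ) * z₁) := by
      have hr1 : Real.sqrt (2 * δ * vb ^ 2 * a / m) = Real.sqrt δ * z₀ := by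
        rw [hz₀def, ← Real.sqrt_mul hδ0]
        congr 1
        rw [hk_def]
        field_simp
      have hr2 : ((Real.sqrt δ : ℝ) : ℂ) * (((Real.sqrt δ : ℝ) : ℂ) * z₁) = (δ : ℂ) * z₁ := by
        rw [← mul_assoc, ← Complex.ofReal_mul, Real.mul_self_sqrt hδ0]
      have hr3 : (δ : ℂ) * z₁ =
          -(Complex.I * (δ : ℂ) * (vb : ℂ) ^ 2 * (w3 : ℂ) * (c3 : ℂ) ^ 2 /
            (2 * (m : ℂ) * (L : ℂ) ^ 2)) := by
        rw [hz₁def, hC, hk_def]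
        push_cast
        field_simp
      rw [hr1, mul_add, hr2, hr3]
      push_cast
      ring
    rw [htar, ← mul_sub]
    have hnorm : ‖((Real.sqrt δ : ℝ) : ℂ) * (zf δ - ((z₀ : ℂ) + ((Real.sqrt δ : ℝ) : ℂ) * z₁))‖ =
        Real.sqrt δ * Complex.abs (zf δ - ((z₀ : ℂ) + ((Real.sqrt δ : ℝ) : ℂ) * z₁)) := by
      rw [Complex.norm_eq_abs, map_mul, Complex.abs_ofReal, abs_of_nonneg (Real.sqrt_nonneg δ)]
    rw [hnorm]
    have hpow : Real.sqrt δ ^ 3 = δ ^ ((3 : ℝ) / 2) := by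
      rw [Real.sqrt_eq_rpow, ← Real.rpow_natCast (δ ^ ((1 : ℝ) / 2)) 3, ← Real.rpow_mul hδ0]
      norm_num
    have hgnorm : ‖δ ^ ((3 : ℝ) / 2)‖ = δ ^ ((3 : ℝ) / 2) := by
      rw [Real.norm_eq_abs, abs_of_nonneg (Real.rpow_nonneg hδ0 _)]
    rw [hgnorm, ← hpow]
    calc Real.sqrt δ * Complex.abs (zf δ - ((z₀ : ℂ) + ((Real.sqrt δ : ℝ) : ℂ) * z₁)) ≤
        Real.sqrt δ * (K * Real.sqrt δ ^ 2) :=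
          mul_le_mul_of_nonneg_left hdist (Real.sqrt_nonneg δ)
      _ = K * Real.sqrt δ ^ 3 := by ring
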